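/- Let F be a field, k ≥ 2, and let Ũ(λ) ∈ F[λ]^{k×k} be the polynomial matrix obtained by stacking M_Φ(λ) on top of the row vector e_k^T = (0, …, 0, 1). Then det Ũ(λ) = (−1)^{k−1} α_0 α_1 ⋯ α_{k−2}, a nonzero constant, so Ũ(λ) is unimodular; moreover Ũ(λ)·Φ_k(λ) = e_k, i.e., Φ_k(λ) is the last column of Ũ(λ)^{−1}. Consequently U(λ) := Ũ(λ) ⊗ I_m is a unimodular km×km polynomial matrix and U(λ)·(Φ_k(λ)⊗I_m) = e_k⊗I_m. -/

import Mathlib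

open Matrix
open scoped Kronecker

/-- The column vector `Φ_k(λ) ⊗ I_m` as a `km × m` polynomial matrix. -/
noncomputable def phiKron {F : Type*} [Field F] (φ : ℕ → Polynomial F) (k m : ℕ) :
    Matrix (Fin k × Fin m) (Fin m) (Polynomial F) :=
  Matrix.of fun p j => if p.2 = j then φ (k - 1 - (p.1 : ℕ)) else 0

/-- The pencil `M_Φ(λ) ∈ F[λ]^{(k-1)×k}`. -/
noncomputable def MPhiMat {F : Type*} [Field F] (α β γ : ℕ → F) (k : ℕ) :
    Matrix (Fin (k - 1)) (Fin k) (Polynomial F) :=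
  Matrix.of fun i j =>
    if (j : ℕ) = (i : ℕ) then -Polynomial.C (α (k - 2 - (i : ℕ)))
    else if (j : ℕ) = (i : ℕ) + 1 then Polynomial.X - Polynomial.C (β (k - 2 - (i : ℕ)))
    else if (j : ℕ) = (i : ℕ) + 2 then -Polynomial.C (γ (k - 2 - (i : ℕ)))
    else 0

/-- The matrix `Ũ(λ) ∈ F[λ]^{k×k}`: `M_Φ(λ)` stacked on top of the row `e_kᵀ = (0,…,0,1)`. -/
noncomputable def UtildeMat {F : Type*} [Field F] (α β γ : ℕ → F) (k : ℕ) :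
    Matrix (Fin k) (Fin k) (Polynomial F) :=
  Matrix.of fun i j =>
    if h : (i : ℕ) < k - 1 then MPhiMat α β γ k ⟨(i : ℕ), h⟩ j
    else if (j : ℕ) = k - 1 then 1 else 0

/-- `det Ũ(λ) = (−1)^{k−1} α_0 ⋯ α_{k−2}` is a nonzero constant, so `Ũ(λ)` is
unimodular; `Ũ(λ) Φ_k(λ) = e_k`; and `U(λ) = Ũ(λ) ⊗ I_m` is unimodular with
`U(λ)(Φ_k(λ) ⊗ I_m) = e_k ⊗ I_m`. -/
lemma sum_ite_coe {R : Type*} [AddCommMonoid R] {k : ℕ} (c : ℕ) (f : Fin k → R) :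
    (∑ j : Fin k, if (j : ℕ) = c then f j else 0) = if h : c < k then f ⟨c, h⟩ else 0 := by
  split
  · next h =>
    rw [Finset.sum_eq_single (⟨c, h⟩ : Fin k)]
    · simp
    · intro b _ hb
      rw [if_neg]
      simpa [Fin.ext_iff] using hb
    · simp
  · next h =>
    apply Finset.sum_eq_zero
    intro j _
    rw [if_neg]
    omega

lemma Utilde_submatrix {F : Type*} [Field F] (α β γ : ℕ → F) (n : ℕ) :
    (UtildeMat α β γ (n + 2)).submatrix Fin.succ Fin.succ = UtildeMat α β γ (n + 1) := by
  ext i j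
  have e : n + 2 - 2 - ((i : ℕ) + 1) = n + 1 - 2 - (i : ℕ) := by omega
  simp only [submatrix_apply, UtildeMat, MPhiMat, of_apply, Fin.val_succ, e]
  split_ifs <;> first | rfl | omega

lemma Utilde_det {F : Type*} [Field F] (α β γ : ℕ → F) : ∀ n : ℕ,
    (UtildeMat α β γ (n + 1)).det
      = Polynomial.C ((-1 : F) ^ n * ∏ i ∈ Finset.range n, α i)
  | 0 => by
    rw [Matrix.det_fin_one]
    simp [UtildeMat]
  | (n + 1) => by
    rw [Matrix.det_succ_column_zero, Finset.sum_eq_single 0]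
    · rw [Fin.succAbove_zero, Utilde_submatrix, Utilde_det α β γ n]
      have h00 : UtildeMat α β γ (n + 2) 0 0 = -Polynomial.C (α n) := by
        simp [UtildeMat, MPhiMat]
      rw [h00]
      simp only [Finset.prod_range_succ, pow_succ, _root_.map_mul, map_neg, map_pow, _root_.map_one]
      ring_nf
      simp [Finset.prod_range_succ, mul_comm, mul_assoc, mul_left_comm]
    · intro i _ hi
      have hz : UtildeMat α β γ (n + 2) i 0 = 0 := by
        have hi' : (i : ℕ) ≠ 0 := Fin.val_ne_zero_iff.mpr hi
        simp only [UtildeMat, MPhiMat, of_apply, Fin.val_zero]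
        split_ifs <;> first | omega | rfl | exact (by assumption : False).elim
      rw [hz]
      ring
    · simp

lemma Utilde_mulVec {F : Type*} [Field F] {k : ℕ} (hk : 2 ≤ k)
    (α β γ : ℕ → F) (φ : ℕ → Polynomial F) (hφ0 : φ 0 = 1)
    (hrec : ∀ j : ℕ, Polynomial.C (α j) * φ (j + 1)
      = (Polynomial.X - Polynomial.C (β j)) * φ j
        - Polynomial.C (γ j) * (if j = 0 then 0 else φ (j - 1))) :
    (UtildeMat α β γ k) *ᵥ (fun i : Fin k => φ (k - 1 - (i : ℕ)))
        = (fun i : Fin k => if (i : ℕ) = k - 1 then 1 else 0) := by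
  funext i
  simp only [mulVec, dotProduct, UtildeMat, of_apply]
  by_cases h : (i : ℕ) < k - 1
  · simp only [dif_pos h]
    have key : ∀ j : Fin k, MPhiMat α β γ k ⟨(i : ℕ), h⟩ j * φ (k - 1 - (j : ℕ))
        = (if (j : ℕ) = (i : ℕ)
            then -Polynomial.C (α (k - 2 - (i : ℕ))) * φ (k - 1 - (j : ℕ)) else 0)
        + (if (j : ℕ) = (i : ℕ) + 1
            then (Polynomial.X - Polynomial.C (β (k - 2 - (i : ℕ)))) * φ (k - 1 - (j : ℕ)) else 0)
        + (if (j : ℕ) = (i : ℕ) + 2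
            then -Polynomial.C (γ (k - 2 - (i : ℕ))) * φ (k - 1 - (j : ℕ)) else 0) := by
      intro j
      simp only [MPhiMat, of_apply]
      split_ifs <;> first | omega | ring
    rw [Finset.sum_congr rfl (fun j _ => key j)]
    simp only [Finset.sum_add_distrib, sum_ite_coe]
    rw [dif_pos i.isLt, dif_pos (show (i : ℕ) + 1 < k by omega),
      if_neg (show ¬ (i : ℕ) = k - 1 by omega)]
    have h1 : k - 1 - (i : ℕ) = (k - 2 - (i : ℕ)) + 1 := by omega
    have h2 : k - 1 - ((i : ℕ) + 1) = k - 2 - (i : ℕ) := by omega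
    have hr := hrec (k - 2 - (i : ℕ))
    by_cases h3 : (i : ℕ) + 2 < k
    · rw [dif_pos h3]
      have h4 : k - 1 - ((i : ℕ) + 2) = (k - 2 - (i : ℕ)) - 1 := by omega
      rw [if_neg (show ¬ k - 2 - (i : ℕ) = 0 by omega)] at hr
      rw [h1, h2, h4]
      linear_combination -hr
    · rw [dif_neg h3]
      rw [if_pos (show k - 2 - (i : ℕ) = 0 by omega)] at hr
      rw [h1, h2]
      linear_combination -hr
  · simp only [dif_neg h]
    have hik : (i : ℕ) = k - 1 := by omega
    simp only [ite_mul, one_mul, zero_mul, sum_ite_coe, dif_pos (show k - 1 < k by omega),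
      if_pos hik]
    simp [hφ0]

theorem Utilde_unimodular
    {F : Type*} [Field F] {k m : ℕ} (hk : 2 ≤ k)
    (α β γ : ℕ → F) (hα : ∀ j, α j ≠ 0)
    (φ : ℕ → Polynomial F) (hφ0 : φ 0 = 1)
    (hrec : ∀ j : ℕ, Polynomial.C (α j) * φ (j + 1)
      = (Polynomial.X - Polynomial.C (β j)) * φ j
        - Polynomial.C (γ j) * (if j = 0 then 0 else φ (j - 1))) :
    (UtildeMat α β γ k).det
        = Polynomial.C ((-1 : F) ^ (k - 1) * ∏ i ∈ Finset.range (k - 1), α i) ∧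
    ((-1 : F) ^ (k - 1) * ∏ i ∈ Finset.range (k - 1), α i) ≠ 0 ∧
    IsUnit (UtildeMat α β γ k).det ∧
    (UtildeMat α β γ k) *ᵥ (fun i : Fin k => φ (k - 1 - (i : ℕ)))
        = (fun i : Fin k => if (i : ℕ) = k - 1 then 1 else 0) ∧
    IsUnit ((UtildeMat α β γ k) ⊗ₖ (1 : Matrix (Fin m) (Fin m) (Polynomial F))).det ∧
    ((UtildeMat α β γ k) ⊗ₖ (1 : Matrix (Fin m) (Fin m) (Polynomial F))) * phiKron φ k m
        = Matrix.of (fun (p : Fin k × Fin m) (j : Fin m) =>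
            if (p.1 : ℕ) = k - 1 ∧ p.2 = j then 1 else 0) := by
  obtain ⟨n, rfl⟩ : ∃ n, k = n + 1 := ⟨k - 1, by omega⟩
  have hdet := Utilde_det α β γ n
  have hne : ((-1 : F) ^ ((n+1) - 1) * ∏ i ∈ Finset.range ((n+1) - 1), α i) ≠ 0 := by
    simp only [Nat.add_sub_cancel]
    exact mul_ne_zero (pow_ne_zero _ (by norm_num))
      (Finset.prod_ne_zero_iff.mpr fun i _ => hα i)
  have hdet' : (UtildeMat α β γ (n+1)).det
      = Polynomial.C ((-1 : F) ^ ((n+1) - 1) * ∏ i ∈ Finset.range ((n+1) - 1), α i) := by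
    simpa using hdet
  have hunit : IsUnit (UtildeMat α β γ (n+1)).det := by
    rw [hdet', Polynomial.isUnit_C]
    exact isUnit_iff_ne_zero.mpr hne
  have hmv := Utilde_mulVec hk α β γ φ hφ0 hrec
  refine ⟨hdet', hne, hunit, hmv, ?_, ?_⟩
  · rw [Matrix.det_kronecker, Matrix.det_one, one_pow, mul_one]
    exact hunit.pow _
  · refine Matrix.ext fun p j => ?_
    rw [Matrix.mul_apply, Fintype.sum_prod_type]
    have inner : ∀ a : Fin (n+1),
        (∑ b : Fin m,
            ((UtildeMat α β γ (n+1)) ⊗ₖ (1 : Matrix (Fin m) (Fin m) (Polynomial F))) p (a, b)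
              * phiKron φ (n+1) m (a, b) j)
          = if p.2 = j then UtildeMat α β γ (n+1) p.1 a * φ (n + 1 - 1 - (a : ℕ)) else 0 := by
      intro a
      rw [Finset.sum_eq_single p.2]
      · by_cases hj : p.2 = j <;> simp [phiKron, Matrix.one_apply, hj]
      · intro b _ hb
        simp [Matrix.one_apply, Ne.symm hb]
      · simp
    rw [Finset.sum_congr rfl fun a _ => inner a]
    have hmv' := congrFun hmv p.1
    simp only [mulVec, dotProduct] at hmv'
    by_cases hj : p.2 = j
    · simp only [hj, Matrix.of_apply, and_true, eq_self_iff_true, if_true]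
      exact hmv'
    · simp [hj]
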